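/- Let R be a complete local ring with maximal ideal m, and let A be a commutative R-algebra that is free of finite rank as an R-module. If there exist elements e₁,…,eₙ ∈ A whose images form an orthogonal idempotent basis of A/mA (i.e., eᵢ² − eᵢ ∈ mA and eᵢeⱼ ∈ mA for i ≠ j, and the images form an R/m-basis), then there exist elements ẽ₁,…,ẽₙ ∈ A forming an R-basis of A with ẽᵢ² = ẽᵢ and ẽᵢẽⱼ = 0 for i ≠ j. -/

import Mathlib

namespace IdempotentLiftAux

open Submodule

variable {R A : Type*} [CommRing R] [CommRing A] [Algebra R A]

lemma smul_top_pow_eq (I : Ideal R) (k : ℕ) :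
    (I ^ k • ⊤ : Submodule R A) =
      Submodule.restrictScalars R ((I.map (algebraMap R A)) ^ k) := by
  rw [Ideal.smul_top_eq_map, Ideal.map_pow]

lemma mul_mem' {I : Ideal R} {a b : ℕ} {x y : A}
    (hx : x ∈ (I ^ a • ⊤ : Submodule R A)) (hy : y ∈ (I ^ b • ⊤ : Submodule R A)) :
    x * y ∈ (I ^ (a + b) • ⊤ : Submodule R A) := by
  rw [smul_top_pow_eq] at hx hy ⊢
  rw [pow_add]
  exact Ideal.mul_mem_mul hx hy

lemma mul_mem_left {I : Ideal R} {k : ℕ} (a : A) {x : A}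
    (hx : x ∈ (I ^ k • ⊤ : Submodule R A)) :
    a * x ∈ (I ^ k • ⊤ : Submodule R A) := by
  rw [smul_top_pow_eq] at hx ⊢
  exact Ideal.mul_mem_left _ a hx

lemma antitone' {I : Ideal R} {a b : ℕ} (h : a ≤ b) :
    (I ^ b • ⊤ : Submodule R A) ≤ (I ^ a • ⊤ : Submodule R A) :=
  Submodule.smul_mono_left (Ideal.pow_le_pow_right h)

lemma mem_smul_top_iff_repr {ι : Type*} [Fintype ι] (b : Module.Basis ι R A) (J : Ideal R) (x : A) :
    x ∈ (J • ⊤ : Submodule R A) ↔ ∀ i, b.repr x i ∈ J := by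
  constructor
  · intro hx
    refine Submodule.smul_induction_on hx ?_ ?_
    · intro r hr m _ i
      rw [map_smul, Finsupp.smul_apply, smul_eq_mul]
      exact Ideal.mul_mem_right _ _ hr
    · intro x y hx hy i
      rw [map_add, Finsupp.add_apply]
      exact Ideal.add_mem _ (hx i) (hy i)
  · intro h
    rw [← b.sum_repr x]
    exact Submodule.sum_mem _ fun i _ => Submodule.smul_mem_smul (h i) Submodule.mem_top

lemma ideal_smul_top_self (J : Ideal R) : (J • ⊤ : Submodule R R) = J := by
  rw [Ideal.smul_top_eq_map]
  simp

variable (I : Ideal R)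

/-- Hausdorff property transferred to a finite free module. -/
lemma eq_zero_of_forall_mem [IsHausdorff I R] {ι : Type*} [Fintype ι] (b : Module.Basis ι R A)
    {x : A} (hx : ∀ k : ℕ, x ∈ (I ^ k • ⊤ : Submodule R A)) : x = 0 := by
  have hcoord : ∀ i, b.repr x i = 0 := by
    intro i
    refine IsHausdorff.haus ‹IsHausdorff I R› _ fun k => ?_
    rw [SModEq.zero, ideal_smul_top_self]
    exact (mem_smul_top_iff_repr b (I ^ k) x).mp (hx k) i
  have : b.repr x = 0 := Finsupp.ext hcoord
  simpa using congrArg b.repr.symm this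

/-- Precompleteness transferred to a finite free module. -/
lemma exists_limit [IsPrecomplete I R] {ι : Type*} [Fintype ι] (b : Module.Basis ι R A)
    (g : ℕ → A) (hg : ∀ m n, m ≤ n → g n - g m ∈ (I ^ m • ⊤ : Submodule R A)) :
    ∃ L : A, ∀ m, L - g m ∈ (I ^ m • ⊤ : Submodule R A) := by
  have key : ∀ i : ι, ∃ Li : R, ∀ m, b.repr (g m) i ≡ Li [SMOD (I ^ m • ⊤ : Submodule R R)] := by
    intro i
    refine IsPrecomplete.prec ‹IsPrecomplete I R› ?_
    intro m n hmn
    rw [SModEq.sub_mem, ideal_smul_top_self]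
    have : g n - g m ∈ (I ^ m • ⊤ : Submodule R A) := hg m n hmn
    have := (mem_smul_top_iff_repr b (I ^ m) _).mp this i
    rw [map_sub, Finsupp.sub_apply] at this
    simpa using neg_mem this
  choose Li hLi using key
  refine ⟨b.equivFun.symm Li, fun m => ?_⟩
  rw [mem_smul_top_iff_repr b]
  intro i
  have h1 : b.repr (b.equivFun.symm Li - g m) i = Li i - b.repr (g m) i := by
    rw [map_sub, Finsupp.sub_apply]
    congr 1
    have h0 : b.equivFun (b.equivFun.symm Li) = Li := b.equivFun.apply_symm_apply Li
    rw [Module.Basis.equivFun_apply] at h0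
    exact congrFun (congrArg (fun f => (f : ι → R)) h0) i
  rw [h1]
  have h2 := hLi i m
  rw [SModEq.sub_mem, ideal_smul_top_self] at h2
  simpa [neg_sub] using neg_mem h2

lemma repr_equivFun_symm {ι : Type*} [Fintype ι] (b : Module.Basis ι R A) (v : ι → R) (i : ι) :
    b.repr (b.equivFun.symm v) i = v i := by
  have h0 : b.equivFun (b.equivFun.symm v) = v := b.equivFun.apply_symm_apply v
  rw [Module.Basis.equivFun_apply] at h0
  exact congrFun (congrArg (fun f => (f : ι → R)) h0) i

end IdempotentLiftAux

/-- **Idempotent lifting over a complete local ring.**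
Let `R` be a complete local (Noetherian) ring with maximal ideal `m`, and `A` a
commutative `R`-algebra, free of finite rank as an `R`-module.  If `e₁, …, eₙ ∈ A`
have images forming an orthogonal idempotent basis of `A/mA` over `R/m`, then there
exist `ẽ₁, …, ẽₙ ∈ A` forming an `R`-basis of `A` with `ẽᵢ² = ẽᵢ` and `ẽᵢẽⱼ = 0`
for `i ≠ j`. -/
theorem idempotent_basis_lift
    {R A : Type*} [CommRing R] [IsLocalRing R] [IsNoetherianRing R]
    [IsAdicComplete (IsLocalRing.maximalIdeal R) R]
    [CommRing A] [Algebra R A] [Module.Free R A] [Module.Finite R A]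
    {n : ℕ} (e : Fin n → A)
    (hid : ∀ i, e i * e i - e i ∈ (IsLocalRing.maximalIdeal R) • (⊤ : Submodule R A))
    (horth : ∀ i j, i ≠ j → e i * e j ∈ (IsLocalRing.maximalIdeal R) • (⊤ : Submodule R A))
    (hbasis : ∃ bq : Module.Basis (Fin n) (R ⧸ IsLocalRing.maximalIdeal R)
        (A ⧸ ((IsLocalRing.maximalIdeal R) • (⊤ : Submodule R A))),
      ∀ i, bq i = Submodule.Quotient.mk (e i)) :
    ∃ et : Fin n → A,
      (∃ bA : Module.Basis (Fin n) R A, ∀ i, bA i = et i) ∧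
      (∀ i, et i * et i = et i) ∧
      (∀ i j, i ≠ j → et i * et j = 0) := by
  classical
  set p := IsLocalRing.maximalIdeal R with hp
  obtain ⟨bq, hbq⟩ := hbasis
  open IdempotentLiftAux in
  -- Newton iteration
  let F : A → A := fun x => x ^ 2 * (3 - 2 * x)
  let E : ℕ → Fin n → A := fun k i => F^[k] (e i)
  have hE0 : ∀ i, E 0 i = e i := fun i => rfl
  have hEsucc : ∀ k i, E (k + 1) i = F (E k i) := fun k i =>
    Function.iterate_succ_apply' F k (e i)
  have key : ∀ k, (∀ i, E k i * E k i - E k i ∈ (p ^ (k + 1) • ⊤ : Submodule R A)) ∧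
      (∀ i j, i ≠ j → E k i * E k j ∈ (p ^ (k + 1) • ⊤ : Submodule R A)) := by
    intro k
    induction k with
    | zero =>
      constructor
      · intro i; simpa [pow_one, hE0] using hid i
      · intro i j hij; simpa [pow_one, hE0] using horth i j hij
    | succ k ih =>
      obtain ⟨ih1, ih2⟩ := ih
      constructor
      · intro i
        have hu : (E k i * E k i - E k i) * (E k i * E k i - E k i) ∈
            (p ^ ((k + 1) + (k + 1)) • ⊤ : Submodule R A) :=
          IdempotentLiftAux.mul_mem' (ih1 i) (ih1 i)
        have h2 : (4 * (E k i * E k i - E k i) - 3) *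
            ((E k i * E k i - E k i) * (E k i * E k i - E k i)) ∈
            (p ^ ((k + 1) + (k + 1)) • ⊤ : Submodule R A) :=
          IdempotentLiftAux.mul_mem_left _ hu
        have h3 := IdempotentLiftAux.antitone' (show k + 1 + 1 ≤ (k + 1) + (k + 1) by omega) h2
        have hident : E (k + 1) i * E (k + 1) i - E (k + 1) i =
            (4 * (E k i * E k i - E k i) - 3) *
              ((E k i * E k i - E k i) * (E k i * E k i - E k i)) := by
          rw [hEsucc]; simp only [F]; ring
        rw [hident]; exact h3
      · intro i j hij
        have hu : (E k i * E k j) * (E k i * E k j) ∈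
            (p ^ ((k + 1) + (k + 1)) • ⊤ : Submodule R A) :=
          IdempotentLiftAux.mul_mem' (ih2 i j hij) (ih2 i j hij)
        have h2 : ((3 - 2 * E k i) * (3 - 2 * E k j)) *
            ((E k i * E k j) * (E k i * E k j)) ∈
            (p ^ ((k + 1) + (k + 1)) • ⊤ : Submodule R A) :=
          IdempotentLiftAux.mul_mem_left _ hu
        have h3 := IdempotentLiftAux.antitone' (show k + 1 + 1 ≤ (k + 1) + (k + 1) by omega) h2
        have hident : E (k + 1) i * E (k + 1) j =
            ((3 - 2 * E k i) * (3 - 2 * E k j)) * ((E k i * E k j) * (E k i * E k j)) := by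
          rw [hEsucc, hEsucc]; simp only [F]; ring
        rw [hident]; exact h3
  have diff : ∀ k i, E (k + 1) i - E k i ∈ (p ^ (k + 1) • ⊤ : Submodule R A) := by
    intro k i
    have h1 := (key k).1 i
    have hident : E (k + 1) i - E k i = (1 - 2 * E k i) * (E k i * E k i - E k i) := by
      rw [hEsucc]; simp only [F]; ring
    rw [hident]; exact IdempotentLiftAux.mul_mem_left _ h1
  have chain : ∀ (i : Fin n) (m nn : ℕ), m ≤ nn →
      E nn i - E m i ∈ (p ^ m • ⊤ : Submodule R A) := by
    intro i m nn h
    induction nn with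
    | zero =>
      have hm0 : m = 0 := Nat.le_zero.mp h
      subst hm0; rw [sub_self]; exact zero_mem _
    | succ l ihl =>
      rcases Nat.lt_or_ge m (l + 1) with hlt | hge
      · have hml : m ≤ l := Nat.lt_succ_iff.mp hlt
        have h1 := ihl hml
        have h2 := IdempotentLiftAux.antitone' (show m ≤ l + 1 by omega) (diff l i)
        have hident : E (l + 1) i - E m i = (E (l + 1) i - E l i) + (E l i - E m i) := by ring
        rw [hident]; exact add_mem h2 h1
      · have hm : m = l + 1 := le_antisymm h hge
        subst hm; rw [sub_self]; exact zero_mem _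
  -- pass to the limit
  let b := Module.Free.chooseBasis R A
  have hlim : ∀ i, ∃ L : A, ∀ m, L - E m i ∈ (p ^ m • ⊤ : Submodule R A) := fun i =>
    IdempotentLiftAux.exists_limit p b (fun k => E k i) (fun m nn h => chain i m nn h)
  choose et het using hlim
  have haus : ∀ x : A, (∀ k, x ∈ (p ^ k • ⊤ : Submodule R A)) → x = 0 := fun x hx =>
    IdempotentLiftAux.eq_zero_of_forall_mem p b hx
  have hidem : ∀ i, et i * et i = et i := by
    intro i
    have hz : ∀ k, et i * et i - et i ∈ (p ^ k • ⊤ : Submodule R A) := by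
      intro k
      have h1 := IdempotentLiftAux.antitone' (show k ≤ k + 1 by omega) ((key k).1 i)
      have h2 := het i k
      have hident : et i * et i - et i =
          (E k i * E k i - E k i) + (et i + E k i - 1) * (et i - E k i) := by ring
      rw [hident]
      exact add_mem h1 (IdempotentLiftAux.mul_mem_left _ h2)
    exact sub_eq_zero.mp (haus _ hz)
  have horth' : ∀ i j, i ≠ j → et i * et j = 0 := by
    intro i j hij
    have hz : ∀ k, et i * et j ∈ (p ^ k • ⊤ : Submodule R A) := by
      intro k
      have h1 := IdempotentLiftAux.antitone' (show k ≤ k + 1 by omega) ((key k).2 i j hij)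
      have h2 := het i k
      have h3 := het j k
      have hident : et i * et j =
          (E k i * E k j) + et j * (et i - E k i) + E k i * (et j - E k j) := by ring
      rw [hident]
      exact add_mem (add_mem h1 (IdempotentLiftAux.mul_mem_left _ h2))
        (IdempotentLiftAux.mul_mem_left _ h3)
    exact haus _ hz
  -- the images of et agree with those of e
  have hmk : ∀ i, (Submodule.Quotient.mk (et i) : A ⧸ (p • ⊤ : Submodule R A)) =
      Submodule.Quotient.mk (e i) := by
    intro i
    rw [Submodule.Quotient.eq]
    have h1 := het i 1
    have h2 : E 1 i - E 0 i ∈ (p ^ 1 • ⊤ : Submodule R A) := diff 0 i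
    have hident : et i - e i = (et i - E 1 i) + (E 1 i - E 0 i) := by rw [hE0]; ring
    rw [hident]
    simpa [pow_one] using add_mem h1 h2
  -- scalar tower instance
  haveI htower : IsScalarTower R (R ⧸ p) (A ⧸ (p • ⊤ : Submodule R A)) := by
    constructor
    intro r s x
    obtain ⟨u, rfl⟩ := Ideal.Quotient.mk_surjective s
    obtain ⟨y, rfl⟩ := Submodule.Quotient.mk_surjective _ x
    have h1 : r • (Ideal.Quotient.mk p u) = Ideal.Quotient.mk p (r * u) := by
      rw [Algebra.smul_def]
      rfl
    rw [h1, Module.Quotient.mk_smul_mk, Module.Quotient.mk_smul_mk,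
      ← Submodule.Quotient.mk_smul, smul_smul]
  -- span of et is everything
  have hspan : Submodule.span R (Set.range et) = ⊤ := by
    rw [← IsLocalRing.map_mkQ_eq_top (R := R) (M := A), Submodule.map_span]
    have himg : (Submodule.mkQ (p • ⊤ : Submodule R A)) '' (Set.range et) = Set.range bq := by
      rw [← Set.range_comp]
      refine congrArg Set.range (funext fun i => ?_)
      simp only [Function.comp_apply, Submodule.mkQ_apply]
      rw [hmk i, hbq i]
    rw [himg, ← Submodule.restrictScalars_span R (R ⧸ p) Ideal.Quotient.mk_surjective,
      bq.span_eq, Submodule.restrictScalars_top]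
  -- linear independence of et
  have hcard : Nonempty (Module.Free.ChooseBasisIndex R A ≃ Fin n) := by
    -- build a basis of the quotient indexed by the free basis index
    have hli : LinearIndependent (R ⧸ p)
        (fun i : Module.Free.ChooseBasisIndex R A =>
          (Submodule.Quotient.mk (b i) : A ⧸ (p • ⊤ : Submodule R A))) := by
      refine Fintype.linearIndependent_iff.mpr ?_
      intro g hg i
      choose r hr using fun j => Ideal.Quotient.mk_surjective (g j)
      have hsum : (Submodule.Quotient.mk (∑ j, r j • b j) :
          A ⧸ (p • ⊤ : Submodule R A)) = ∑ j, g j • Submodule.Quotient.mk (b j) := by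
        rw [show (Submodule.Quotient.mk (∑ j, r j • b j) : A ⧸ (p • ⊤ : Submodule R A)) =
          Submodule.mkQ (p • ⊤ : Submodule R A) (∑ j, r j • b j) from rfl, map_sum]
        simp only [Submodule.mkQ_apply]
        refine Finset.sum_congr rfl fun j _ => ?_
        rw [← hr j, Module.Quotient.mk_smul_mk]
      have hmem : (∑ j, r j • b j) ∈ (p • ⊤ : Submodule R A) :=
        (Submodule.Quotient.mk_eq_zero _).mp (hsum.trans hg)
      have hco := (IdempotentLiftAux.mem_smul_top_iff_repr b p _).mp hmem i
      have heq : (∑ j, r j • b j) = b.equivFun.symm r := by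
        rw [Module.Basis.equivFun_symm_apply]
      rw [heq, IdempotentLiftAux.repr_equivFun_symm] at hco
      rw [← hr i, Ideal.Quotient.eq_zero_iff_mem]
      exact hco
    have hsp : ⊤ ≤ Submodule.span (R ⧸ p)
        (Set.range fun i : Module.Free.ChooseBasisIndex R A =>
          (Submodule.Quotient.mk (b i) : A ⧸ (p • ⊤ : Submodule R A))) := by
      intro x _
      obtain ⟨y, rfl⟩ := Submodule.Quotient.mk_surjective _ x
      have hy : (Submodule.Quotient.mk y : A ⧸ (p • ⊤ : Submodule R A)) =
          ∑ j, (Ideal.Quotient.mk p (b.repr y j)) • Submodule.Quotient.mk (b j) := by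
        conv_lhs => rw [← b.sum_repr y]
        rw [show (Submodule.Quotient.mk (∑ j, b.repr y j • b j) :
            A ⧸ (p • ⊤ : Submodule R A)) =
          Submodule.mkQ (p • ⊤ : Submodule R A) (∑ j, b.repr y j • b j) from rfl, map_sum]
        simp only [Submodule.mkQ_apply]
        refine Finset.sum_congr rfl fun j _ => ?_
        rw [Module.Quotient.mk_smul_mk]
      rw [hy]
      exact Submodule.sum_mem _ fun j _ =>
        Submodule.smul_mem _ _ (Submodule.subset_span ⟨j, rfl⟩)
    let v : Module.Basis (Module.Free.ChooseBasisIndex R A) (R ⧸ p)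
        (A ⧸ (p • ⊤ : Submodule R A)) := Module.Basis.mk hli hsp
    exact ⟨v.indexEquiv bq⟩
  obtain ⟨σ⟩ := hcard
  let b' : Module.Basis (Fin n) R A := b.reindex σ
  let φ : (Fin n → R) →ₗ[R] A := Fintype.linearCombination R et
  have hφ : ∀ g : Fin n → R, φ g = ∑ i, g i • et i := fun g => rfl
  have hφsurj : Function.Surjective φ := by
    rw [← LinearMap.range_eq_top, Fintype.range_linearCombination, hspan]
  let ψ : (Fin n → R) →ₗ[R] (Fin n → R) := b'.equivFun.toLinearMap.comp φ
  have hψsurj : Function.Surjective ψ := b'.equivFun.surjective.comp hφsurj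
  have hψinj : Function.Injective ψ :=
    OrzechProperty.injective_of_surjective_endomorphism ψ hψsurj
  have hφinj : Function.Injective φ := by
    intro x y hxy
    exact hψinj (by simp only [ψ, LinearMap.comp_apply, LinearEquiv.coe_coe, hxy])
  have hliet : LinearIndependent R et := by
    refine Fintype.linearIndependent_iff.mpr ?_
    intro g hg i
    have : φ g = φ 0 := by rw [hφ, hg, map_zero]
    have := hφinj this
    rw [this]; rfl
  refine ⟨et, ⟨Module.Basis.mk hliet (by rw [hspan]), fun i => Module.Basis.mk_apply _ _ _⟩, hidem, horth'⟩
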